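/- Let (X_n)_{n≥0} be a stationary ℝ^d-valued process and let φ : ℝ^d → ℝ be a bounded measurable function. Then for every integer p ≥ 1 and every n ≥ 1: |E[(S_n(φ))^p]| ≤ p! · n · I_n(p−1), where S_n(φ) = Σ_{i=0}^{n−1} φ(X_i). -/

import Mathlib

open MeasureTheory Finset

noncomputable section

/-- `istar i k = i_1 + ⋯ + i_k`, the partial sums of the gaps `i : Fin p → ℕ`
(so `istar i 0 = 0`). -/
def istar {p : ℕ} (i : Fin p → ℕ) (k : ℕ) : ℕ :=
  ∑ j ∈ Finset.univ.filter (fun j : Fin p => (j : ℕ) < k), i j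

/-- Stationarity of a process: all shifts have the same law. -/
def IsStationaryProcess {d : ℕ} {Ω : Type*} [MeasurableSpace Ω] (P : Measure Ω)
    (X : ℕ → Ω → (Fin d → ℝ)) : Prop :=
  ∀ k : ℕ, Measure.map (fun ω (n : ℕ) => X (n + k) ω) P =
    Measure.map (fun ω (n : ℕ) => X n ω) P

/-- The index set of `I_n(p)`: gaps `i_1,…,i_p ∈ {0,…,n-1}` with `i_1+⋯+i_p ≤ n-1`. -/
def Iset (n p : ℕ) : Finset (Fin p → ℕ) :=
  (Fintype.piFinset fun _ : Fin p => Finset.range n).filter fun i => ∑ k, i k ≤ n - 1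

/-- `I_n(p) = Σ |E[φ(X_0)φ(X_{i_1^*})⋯φ(X_{i_p^*})]|`, the sum ranging over all
`0 ≤ i_1,…,i_p ≤ n-1` with `i_1+⋯+i_p ≤ n-1`; `I_n(0) = |E[φ(X_0)]|`. -/
def Ifun {d : ℕ} {Ω : Type*} [MeasurableSpace Ω] (P : Measure Ω)
    (X : ℕ → Ω → (Fin d → ℝ)) (φ : (Fin d → ℝ) → ℝ) (n p : ℕ) : ℝ :=
  ∑ i ∈ Iset n p, |∫ ω, ∏ k ∈ Finset.range (p + 1), φ (X (istar i k) ω) ∂P|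

/- ### Auxiliary lemmas -/

lemma istar_zero {q : ℕ} (i : Fin q → ℕ) : istar i 0 = 0 := by
  simp [istar]

lemma istar_succ {q : ℕ} (i : Fin q → ℕ) (k : ℕ) (hk : k < q) :
    istar i (k + 1) = istar i k + i ⟨k, hk⟩ := by
  unfold istar
  rw [Finset.sum_filter, Finset.sum_filter]
  have key : ∀ j : Fin q, (if (j : ℕ) < k + 1 then i j else 0)
      = (if (j : ℕ) < k then i j else 0) + (if j = ⟨k, hk⟩ then i j else 0) := by
    intro j
    by_cases h1 : (j : ℕ) < k
    · have h2 : j ≠ ⟨k, hk⟩ := by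
        intro h
        rw [h] at h1
        exact absurd h1 (by simp)
      simp [h1, Nat.lt_succ_of_lt h1, h2]
    · by_cases h2 : j = ⟨k, hk⟩
      · subst h2; simp [h1]
      · have h3 : ¬ (j : ℕ) < k + 1 := by
          rcases Nat.lt_or_ge (j : ℕ) (k + 1) with h | h
          · have hjk : (j : ℕ) = k := by omega
            exact absurd (Fin.ext hjk) h2
          · omega
        simp [h1, h2, h3]
  rw [Finset.sum_congr rfl fun j _ => key j, Finset.sum_add_distrib,
    Finset.sum_ite_eq' Finset.univ (⟨k, hk⟩ : Fin q) i]
  simp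

lemma istar_univ {q : ℕ} (i : Fin q → ℕ) : istar i q = ∑ k, i k := by
  unfold istar
  rw [Finset.filter_true_of_mem fun j _ => j.isLt]

lemma sorted_eq {q : ℕ} (s : Fin (q + 1) → ℕ) (hs : Monotone s) :
    ∀ k, (hk : k ≤ q) → s ⟨k, Nat.lt_succ_of_le hk⟩
      = s 0 + istar (fun j : Fin q => s j.succ - s j.castSucc) k := by
  intro k
  induction k with
  | zero =>
    intro _
    simp [istar_zero]
  | succ k ih =>
    intro hk
    have hk' : k < q := hk
    have hkq : k ≤ q := le_of_lt hk'
    rw [istar_succ _ k hk']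
    have hih := ih hkq
    have hle : s ⟨k, Nat.lt_succ_of_le hkq⟩ ≤ s ⟨k + 1, Nat.lt_succ_of_le hk⟩ :=
      hs (by simp [Fin.le_def])
    have hsucc : (⟨k, hk'⟩ : Fin q).succ = ⟨k + 1, Nat.lt_succ_of_le hk⟩ := rfl
    have hcast : (⟨k, hk'⟩ : Fin q).castSucc = ⟨k, Nat.lt_succ_of_le hkq⟩ := rfl
    simp only [hsucc, hcast]
    omega

/-- The sorted version of a tuple. -/
def srt {q : ℕ} (g : Fin (q + 1) → ℕ) : Fin (q + 1) → ℕ := g ∘ Tuple.sort g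

/-- The gaps of the sorted version of a tuple. -/
def gap {q : ℕ} (g : Fin (q + 1) → ℕ) : Fin q → ℕ :=
  fun k => srt g k.succ - srt g k.castSucc

/-- The map sending a tuple to its minimum together with its sorted gaps. -/
def Fmap {q : ℕ} (g : Fin (q + 1) → ℕ) : ℕ × (Fin q → ℕ) := (srt g 0, gap g)

lemma srt_eq {q : ℕ} (g : Fin (q + 1) → ℕ) (k : Fin (q + 1)) :
    srt g k = srt g 0 + istar (gap g) k := by
  have h := sorted_eq (srt g) (Tuple.monotone_sort g) k (by omega)
  exact h

lemma fiber_card_le {q n : ℕ} (y : ℕ × (Fin q → ℕ)) :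
    ((Fintype.piFinset fun _ : Fin (q + 1) => Finset.range n).filter
      fun g => Fmap g = y).card ≤ (q + 1).factorial := by
  classical
  set sy : Fin (q + 1) → ℕ := fun k => y.1 + istar y.2 (k : ℕ) with hsy
  have hsub : ((Fintype.piFinset fun _ : Fin (q + 1) => Finset.range n).filter
      fun g => Fmap g = y) ⊆
      Finset.univ.image (fun σ : Equiv.Perm (Fin (q + 1)) => sy ∘ σ) := by
    intro g hg
    rw [Finset.mem_filter] at hg
    obtain ⟨-, hg2⟩ := hg
    have hsrt : srt g = sy := by
      funext k
      have h := srt_eq g k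
      rw [h]
      have h1 : srt g 0 = y.1 := congrArg Prod.fst hg2
      have h2 : gap g = y.2 := congrArg Prod.snd hg2
      rw [h1, h2]
    rw [Finset.mem_image]
    refine ⟨(Tuple.sort g)⁻¹, Finset.mem_univ _, ?_⟩
    funext k
    have : sy ((Tuple.sort g)⁻¹ k) = srt g ((Tuple.sort g)⁻¹ k) := by rw [hsrt]
    rw [Function.comp_apply, this]
    simp [srt]
  calc ((Fintype.piFinset fun _ : Fin (q + 1) => Finset.range n).filter
        fun g => Fmap g = y).card
      ≤ (Finset.univ.image (fun σ : Equiv.Perm (Fin (q + 1)) => sy ∘ σ)).card :=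
        Finset.card_le_card hsub
    _ ≤ (Finset.univ : Finset (Equiv.Perm (Fin (q + 1)))).card := Finset.card_image_le
    _ = (q + 1).factorial := by
        rw [Finset.card_univ, Fintype.card_perm, Fintype.card_fin]

lemma Fmap_mem {q n : ℕ} (hn : 1 ≤ n) (g : Fin (q + 1) → ℕ)
    (hg : g ∈ Fintype.piFinset fun _ : Fin (q + 1) => Finset.range n) :
    Fmap g ∈ Finset.range n ×ˢ Iset n q := by
  have hval : ∀ k, srt g k < n := by
    intro k
    have := Fintype.mem_piFinset.mp hg (Tuple.sort g k)
    simpa [srt] using Finset.mem_range.mp this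
  rw [Finset.mem_product]
  constructor
  · exact Finset.mem_range.mpr (hval 0)
  · rw [Iset, Finset.mem_filter]
    constructor
    · rw [Fintype.mem_piFinset]
      intro k
      rw [Finset.mem_range]
      calc gap g k ≤ srt g k.succ := Nat.sub_le _ _
        _ < n := hval _
    · have h : srt g ⟨q, Nat.lt_succ_self q⟩ = srt g 0 + istar (gap g) q :=
        srt_eq g ⟨q, Nat.lt_succ_self q⟩
      have h2 : srt g ⟨q, Nat.lt_succ_self q⟩ < n := hval _
      rw [show (Fmap g).2 = gap g from rfl, ← istar_univ]
      omega

/-- for a stationary process and a bounded measurable `φ`,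
`|E[(S_n(φ))^p]| ≤ p! · n · I_n(p-1)`. -/
theorem abs_moment_le_factorial_mul_Ifun
    {d : ℕ} {Ω : Type*} [MeasurableSpace Ω] (P : Measure Ω) [IsProbabilityMeasure P]
    (X : ℕ → Ω → (Fin d → ℝ)) (hX : ∀ n, Measurable (X n))
    (hstat : IsStationaryProcess P X)
    (φ : (Fin d → ℝ) → ℝ) (hφmeas : Measurable φ) (hφbdd : ∃ c : ℝ, ∀ x, |φ x| ≤ c)
    (p : ℕ) (hp : 1 ≤ p) (n : ℕ) (hn : 1 ≤ n) :
    |∫ ω, (∑ i ∈ Finset.range n, φ (X i ω)) ^ p ∂P| ≤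
      (p.factorial : ℝ) * n * Ifun P X φ n (p - 1) := by
  classical
  obtain ⟨c, hc⟩ := hφbdd
  obtain ⟨q, rfl⟩ : ∃ q, p = q + 1 := ⟨p - 1, by omega⟩
  simp only [Nat.add_sub_cancel]
  -- Integrability of bounded products
  have hint : ∀ (f : Fin (q + 1) → ℕ),
      Integrable (fun ω => ∏ k, φ (X (f k) ω)) P := by
    intro f
    have hm : Measurable fun ω => ∏ k, φ (X (f k) ω) :=
      Finset.measurable_prod _ fun k _ => hφmeas.comp (hX (f k))
    refine (integrable_const (c ^ (q + 1))).mono' hm.aestronglyMeasurable ?_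
    filter_upwards with ω
    rw [Real.norm_eq_abs, Finset.abs_prod]
    calc ∏ k, |φ (X (f k) ω)| ≤ ∏ _k : Fin (q + 1), c :=
          Finset.prod_le_prod (fun k _ => abs_nonneg _) (fun k _ => hc _)
      _ = c ^ (q + 1) := by simp
  -- Stationarity shift
  have hshift : ∀ (f : ℕ → ℕ) (m : ℕ),
      ∫ ω, ∏ k ∈ Finset.range (q + 1), φ (X (f k + m) ω) ∂P
        = ∫ ω, ∏ k ∈ Finset.range (q + 1), φ (X (f k) ω) ∂P := by
    intro f m
    have hG : Measurable fun y : ℕ → (Fin d → ℝ) =>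
        ∏ k ∈ Finset.range (q + 1), φ (y (f k)) :=
      Finset.measurable_prod _ fun k _ => hφmeas.comp (measurable_pi_apply _)
    have hT : ∀ j : ℕ, Measurable fun ω => (fun i : ℕ => X (i + j) ω) := fun j =>
      measurable_pi_lambda _ fun i => hX (i + j)
    have hT0 : Measurable fun ω => (fun i : ℕ => X i ω) :=
      measurable_pi_lambda _ fun i => hX i
    calc ∫ ω, ∏ k ∈ Finset.range (q + 1), φ (X (f k + m) ω) ∂P
        = ∫ y, ∏ k ∈ Finset.range (q + 1), φ (y (f k))
            ∂(Measure.map (fun ω (i : ℕ) => X (i + m) ω) P) :=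
          (integral_map (hT m).aemeasurable hG.aestronglyMeasurable).symm
      _ = ∫ y, ∏ k ∈ Finset.range (q + 1), φ (y (f k))
            ∂(Measure.map (fun ω (i : ℕ) => X i ω) P) := by rw [hstat m]
      _ = ∫ ω, ∏ k ∈ Finset.range (q + 1), φ (X (f k) ω) ∂P :=
          integral_map hT0.aemeasurable hG.aestronglyMeasurable
  -- Expand the power
  have hexp : ∀ ω : Ω, (∑ i ∈ Finset.range n, φ (X i ω)) ^ (q + 1)
      = ∑ g ∈ Fintype.piFinset fun _ : Fin (q + 1) => Finset.range n,
          ∏ k, φ (X (g k) ω) :=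
    fun ω => Finset.sum_pow' _ _ _
  rw [show (fun ω => (∑ i ∈ Finset.range n, φ (X i ω)) ^ (q + 1))
      = fun ω => ∑ g ∈ Fintype.piFinset fun _ : Fin (q + 1) => Finset.range n,
          ∏ k, φ (X (g k) ω) from funext hexp]
  rw [integral_finset_sum _ fun g _ => hint g]
  -- The value of each term, via sorting and stationarity
  set H : ℕ × (Fin q → ℕ) → ℝ :=
    fun y => |∫ ω, ∏ k ∈ Finset.range (q + 1), φ (X (istar y.2 k) ω) ∂P| with hH
  have hHnn : ∀ y, 0 ≤ H y := fun y => abs_nonneg _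
  have hterm : ∀ g ∈ Fintype.piFinset fun _ : Fin (q + 1) => Finset.range n,
      |∫ ω, ∏ k, φ (X (g k) ω) ∂P| = H (Fmap g) := by
    intro g _
    have hA : ∀ ω : Ω, ∏ k, φ (X (g k) ω)
        = ∏ k ∈ Finset.range (q + 1), φ (X (istar (gap g) k + srt g 0) ω) := by
      intro ω
      calc ∏ k, φ (X (g k) ω)
          = ∏ k, φ (X (g (Tuple.sort g k)) ω) :=
            (Equiv.prod_comp (Tuple.sort g) (fun k => φ (X (g k) ω))).symm
        _ = ∏ k : Fin (q + 1), φ (X (istar (gap g) (k : ℕ) + srt g 0) ω) := by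
            refine Finset.prod_congr rfl fun k _ => ?_
            have : g (Tuple.sort g k) = srt g k := rfl
            rw [this, srt_eq g k, Nat.add_comm]
        _ = ∏ k ∈ Finset.range (q + 1), φ (X (istar (gap g) k + srt g 0) ω) :=
            Fin.prod_univ_eq_prod_range (fun k => φ (X (istar (gap g) k + srt g 0) ω)) _
    rw [show (fun ω => ∏ k, φ (X (g k) ω))
        = fun ω => ∏ k ∈ Finset.range (q + 1), φ (X (istar (gap g) k + srt g 0) ω)
        from funext hA]
    rw [hshift (istar (gap g)) (srt g 0)]
    rfl
  calc |∑ g ∈ Fintype.piFinset fun _ : Fin (q + 1) => Finset.range n,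
        ∫ ω, ∏ k, φ (X (g k) ω) ∂P|
      ≤ ∑ g ∈ Fintype.piFinset fun _ : Fin (q + 1) => Finset.range n,
          |∫ ω, ∏ k, φ (X (g k) ω) ∂P| := Finset.abs_sum_le_sum_abs _ _
    _ = ∑ g ∈ Fintype.piFinset fun _ : Fin (q + 1) => Finset.range n, H (Fmap g) :=
        Finset.sum_congr rfl hterm
    _ = ∑ y ∈ (Fintype.piFinset fun _ : Fin (q + 1) => Finset.range n).image Fmap,
        ((Fintype.piFinset fun _ : Fin (q + 1) => Finset.range n).filter
          fun g => Fmap g = y).card • H y := Finset.sum_comp H Fmap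
    _ ≤ ∑ y ∈ (Fintype.piFinset fun _ : Fin (q + 1) => Finset.range n).image Fmap,
        ((q + 1).factorial : ℝ) * H y := by
        refine Finset.sum_le_sum fun y _ => ?_
        rw [nsmul_eq_mul]
        exact mul_le_mul_of_nonneg_right
          (Nat.cast_le.mpr (fiber_card_le y)) (hHnn y)
    _ ≤ ∑ y ∈ Finset.range n ×ˢ Iset n q, ((q + 1).factorial : ℝ) * H y := by
        refine Finset.sum_le_sum_of_subset_of_nonneg ?_ fun y _ _ =>
          mul_nonneg (by positivity) (hHnn y)
        intro y hy
        rw [Finset.mem_image] at hy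
        obtain ⟨g, hg, rfl⟩ := hy
        exact Fmap_mem hn g hg
    _ = ((q + 1).factorial : ℝ) * n * Ifun P X φ n q := by
        rw [← Finset.mul_sum, Finset.sum_product]
        have : ∀ m ∈ Finset.range n, ∑ i ∈ Iset n q, H (m, i) = Ifun P X φ n q := by
          intro m _
          rfl
        rw [Finset.sum_congr rfl this, Finset.sum_const, Finset.card_range,
          nsmul_eq_mul, mul_assoc]

end
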